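/- arXiv:1109.6490 — 6 statements merged into one kernel-verified Lean document; each statement's English description precedes it below -/
import Mathlib

section
/- For a triangulation of a closed d-dimensional combinatorial manifold X, the h-vector defined by \sum_{i=0}^{d+1} h_i x^{d+1-i} = \sum_{j=0}^{d+1} f_{j-1}(x-1)^{d+1-j} (with f_{-1}=1) satisfies the generalized Dehn–Sommerville relations h_{d+1-i} - h_i = (-1)^i \binom{d+1}{i} (\chi(X) - \chi(S^d)) for all 0 \le i \le d+1. -/
open Finset Polynomial

lemma neg_one_pow_sub' (a b : ℕ) (hb : b ≤ a) : (-1:ℤ)^(a-b) = (-1)^a * (-1)^b := by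
  have : (-1:ℤ)^(a-b) * (-1)^b = (-1)^a := by rw [← pow_add]; congr 1; omega
  have hb2 : ((-1:ℤ))^b * (-1)^b = 1 := by rw [← pow_add, ← two_mul]; exact Even.neg_one_pow ⟨b, by ring⟩
  calc (-1:ℤ)^(a-b) = (-1:ℤ)^(a-b) * ((-1)^b * (-1)^b) := by rw [hb2, mul_one]
    _ = (-1)^a * (-1)^b := by rw [← mul_assoc, this]

lemma Tk_eq
    {V : Type*} [Fintype V] [DecidableEq V] (d : ℕ)
    (Δ : Finset (Finset V))
    (hne : ∀ s ∈ Δ, s.Nonempty)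
    (hdown : ∀ s ∈ Δ, ∀ t : Finset V, t ⊆ s → t.Nonempty → t ∈ Δ)
    (hdim : ∀ s ∈ Δ, s.card ≤ d + 1)
    (hlink : ∀ s ∈ Δ, s.card ≤ d →
      (∑ t ∈ Δ.filter (fun t => Disjoint s t ∧ s ∪ t ∈ Δ), (-1 : ℤ) ^ (t.card - 1))
        = 1 + (-1) ^ (d - s.card))
    (f : ℕ → ℤ)
    (hf : ∀ j : ℕ, f j = if j = 0 then 1 else ((Δ.filter (fun s => s.card = j)).card : ℤ))
    (k : ℕ) (hk1 : 1 ≤ k) (hk2 : k ≤ d) :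
    ∑ j ∈ Finset.range (d+2), (-1:ℤ)^j * (j.choose k) * f j = (-1)^(d+1) * f k := by
  set cf : ℕ → ℤ := fun j => ((Δ.filter (fun s => s.card = j)).card : ℤ) with hcf
  set A := Δ.filter (fun s => s.card = k) with hA
  -- Step 1: sum the link condition over A
  have step1 : ∑ s ∈ A, (∑ t ∈ Δ.filter (fun t => Disjoint s t ∧ s ∪ t ∈ Δ),
      (-1 : ℤ) ^ (t.card - 1)) = cf k * (1 + (-1)^(d-k)) := by
    have : ∀ s ∈ A, (∑ t ∈ Δ.filter (fun t => Disjoint s t ∧ s ∪ t ∈ Δ),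
        (-1 : ℤ) ^ (t.card - 1)) = 1 + (-1:ℤ)^(d-k) := by
      intro s hs
      simp only [hA, Finset.mem_filter] at hs
      rw [hlink s hs.1 (hs.2 ▸ hk2), hs.2]
    rw [Finset.sum_congr rfl this, Finset.sum_const, nsmul_eq_mul]
  -- Step 2: bijection t ↦ s ∪ t
  have step2 : ∀ s ∈ A, (∑ t ∈ Δ.filter (fun t => Disjoint s t ∧ s ∪ t ∈ Δ),
      (-1 : ℤ) ^ (t.card - 1)) = ∑ u ∈ Δ.filter (fun u => s ⊂ u), (-1:ℤ)^(u.card - k - 1) := by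
    intro s hs
    simp only [hA, Finset.mem_filter] at hs
    obtain ⟨hsΔ, hsk⟩ := hs
    refine Finset.sum_nbij' (fun t => s ∪ t) (fun u => u \ s) ?_ ?_ ?_ ?_ ?_
    · intro t ht
      simp only [Finset.mem_filter] at ht ⊢
      obtain ⟨htΔ, hdisj, huΔ⟩ := ht
      refine ⟨huΔ, Finset.ssubset_iff_of_subset Finset.subset_union_left |>.mpr ?_⟩
      obtain ⟨x, hx⟩ := hne t htΔ
      exact ⟨x, Finset.mem_union_right _ hx, Finset.disjoint_right.mp hdisj hx⟩
    · intro u hu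
      simp only [Finset.mem_filter] at hu ⊢
      obtain ⟨huΔ, hsu⟩ := hu
      have hnon : (u \ s).Nonempty := by
        rw [Finset.sdiff_nonempty]; exact fun hc => hsu.2 hc
      refine ⟨hdown u huΔ _ (Finset.sdiff_subset) hnon, Finset.disjoint_sdiff, ?_⟩
      rw [Finset.union_sdiff_of_subset hsu.1]; exact huΔ
    · intro t ht
      simp only [Finset.mem_filter] at ht
      exact Finset.union_sdiff_cancel_left ht.2.1
    · intro u hu
      simp only [Finset.mem_filter] at hu
      exact Finset.union_sdiff_of_subset hu.2.1
    · intro t ht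
      simp only [Finset.mem_filter] at ht
      congr 1
      rw [Finset.card_union_of_disjoint ht.2.1, hsk]
      omega
  -- Step 3: exchange the double sum
  have step3 : ∑ s ∈ A, ∑ u ∈ Δ.filter (fun u => s ⊂ u), (-1:ℤ)^(u.card - k - 1)
      = ∑ u ∈ Δ, ((A.filter (fun s => s ⊂ u)).card : ℤ) * (-1:ℤ)^(u.card - k - 1) := by
    simp only [Finset.sum_filter]
    rw [Finset.sum_comm]
    refine Finset.sum_congr rfl fun u hu => ?_
    rw [← Finset.sum_filter, Finset.sum_const, nsmul_eq_mul]
  -- Step 4: count faces of card k strictly inside u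
  have step4 : ∀ u ∈ Δ, ((A.filter (fun s => s ⊂ u)).card : ℤ)
      = (u.card.choose k : ℤ) - (if u.card = k then 1 else 0) := by
    intro u hu
    have hset : A.filter (fun s => s ⊂ u) = (u.powersetCard k).erase u := by
      ext s
      simp only [hA, Finset.mem_filter, Finset.mem_erase, Finset.mem_powersetCard]
      constructor
      · rintro ⟨⟨hsΔ, hsk⟩, hsu⟩
        exact ⟨hsu.ne, hsu.subset, hsk⟩
      · rintro ⟨hne', hsub, hsk⟩
        refine ⟨⟨hdown u hu s hsub ?_, hsk⟩, Finset.ssubset_iff_subset_ne.mpr ⟨hsub, hne'⟩⟩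
        rw [← Finset.card_pos, hsk]; omega
    rw [hset]
    by_cases hc : u.card = k
    · have hmem : u ∈ u.powersetCard k := by
        rw [Finset.mem_powersetCard]; exact ⟨Finset.Subset.refl u, hc⟩
      rw [Finset.card_erase_of_mem hmem, Finset.card_powersetCard, hc]
      simp [Nat.choose_self]
    · have hmem : u ∉ u.powersetCard k := by
        rw [Finset.mem_powersetCard]; rintro ⟨-, hcc⟩; exact hc hcc
      rw [Finset.erase_eq_of_notMem hmem, Finset.card_powersetCard]
      simp [hc]
  -- the key equation
  have key : ∑ u ∈ Δ, ((u.card.choose k : ℤ) - (if u.card = k then 1 else 0))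
        * (-1:ℤ)^(u.card - k - 1) = cf k * (1 + (-1)^(d-k)) := by
    rw [← step1, Finset.sum_congr rfl step2, step3]
    exact Finset.sum_congr rfl fun u hu => by rw [step4 u hu]
  -- Step 6: rewrite the sign termwise
  have key2 : ∑ u ∈ Δ, ((u.card.choose k : ℤ) - (if u.card = k then 1 else 0))
        * ((-1:ℤ)^(u.card) * (-1:ℤ)^(k+1)) = cf k * (1 + (-1)^(d-k)) := by
    rw [← key]
    refine Finset.sum_congr rfl fun u hu => ?_
    rcases le_or_gt (k+1) u.card with hge | hlt
    · congr 1
      rw [show u.card - k - 1 = u.card - (k+1) by omega, neg_one_pow_sub' _ _ hge]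
    · have hzero : ((u.card.choose k : ℤ) - (if u.card = k then 1 else 0)) = 0 := by
        by_cases hc : u.card = k
        · simp [hc, Nat.choose_self]
        · have : u.card < k := by omega
          simp [Nat.choose_eq_zero_of_lt this, hc]
      rw [hzero, zero_mul, zero_mul]
  -- Step 7: split and fiberwise
  have split1 : ∑ u ∈ Δ, (if u.card = k then (1:ℤ) else 0) * ((-1:ℤ)^(u.card) * (-1:ℤ)^(k+1))
      = cf k * ((-1)^k * (-1)^(k+1)) := by
    rw [Finset.sum_congr rfl (g := fun u => if u.card = k then ((-1:ℤ)^k * (-1:ℤ)^(k+1)) else 0)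
      (fun u hu => by by_cases hc : u.card = k <;> simp [hc]), ← Finset.sum_filter,
      Finset.sum_const, nsmul_eq_mul]
  have split2 : ∑ u ∈ Δ, ((u.card.choose k : ℤ)) * ((-1:ℤ)^(u.card) * (-1:ℤ)^(k+1))
      = ∑ j ∈ Finset.range (d+2), cf j * ((j.choose k : ℤ) * ((-1:ℤ)^j * (-1:ℤ)^(k+1))) := by
    rw [← Finset.sum_fiberwise_of_maps_to (g := fun u => u.card) (t := Finset.range (d+2))
      (fun u hu => Finset.mem_range.mpr (Nat.lt_succ_of_le (hdim u hu)))]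
    refine Finset.sum_congr rfl fun j hj => ?_
    rw [Finset.sum_congr rfl (g := fun u => ((j.choose k : ℤ)) * ((-1:ℤ)^j * (-1:ℤ)^(k+1)))
      (fun u hu => by rw [(Finset.mem_filter.mp hu).2]), Finset.sum_const, nsmul_eq_mul]
  have key3 : (∑ j ∈ Finset.range (d+2), cf j * ((j.choose k : ℤ) * ((-1:ℤ)^j * (-1:ℤ)^(k+1))))
      - cf k * ((-1)^k * (-1)^(k+1)) = cf k * (1 + (-1)^(d-k)) := by
    rw [← split1, ← split2, ← Finset.sum_sub_distrib, ← key2]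
    exact Finset.sum_congr rfl fun u hu => by ring
  -- Step 8: express in terms of f and solve
  have hfk : f k = cf k := by rw [hf]; simp [hcf]; omega
  have hT : ∑ j ∈ Finset.range (d+2), (-1:ℤ)^j * (j.choose k) * f j
      = ∑ j ∈ Finset.range (d+2), cf j * ((j.choose k : ℤ) * (-1:ℤ)^j) := by
    refine Finset.sum_congr rfl fun j hj => ?_
    by_cases hj0 : j = 0
    · subst hj0
      simp [Nat.choose_eq_zero_of_lt hk1]
    · rw [hf]; simp [hj0]; ring
  rw [hT, hfk]
  -- now pure algebra from key3
  have e1 : ((-1:ℤ)^k) * ((-1:ℤ)^k) = 1 := by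
    rw [← pow_add, ← two_mul]; exact Even.neg_one_pow ⟨k, by ring⟩
  have e2 : (-1:ℤ)^(d-k) * (-1:ℤ)^k = (-1)^d := by rw [← pow_add]; congr 1; omega
  have e3 : (-1:ℤ)^(k+1) = (-1)^k * (-1) := pow_succ _ _
  have e4 : (-1:ℤ)^(d+1) = (-1)^d * (-1) := pow_succ _ _
  have key4 : (∑ j ∈ Finset.range (d+2), cf j * ((j.choose k : ℤ) * ((-1:ℤ)^j * (-1:ℤ)^(k+1))))
      = ∑ j ∈ Finset.range (d+2), cf j * ((j.choose k : ℤ) * (-1:ℤ)^j) * (-1:ℤ)^(k+1) := by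
    exact Finset.sum_congr rfl fun j hj => by ring
  rw [key4, ← Finset.sum_mul] at key3
  set S := ∑ j ∈ Finset.range (d+2), cf j * ((j.choose k : ℤ) * (-1:ℤ)^j) with hS
  set a := (-1:ℤ)^k
  set b := (-1:ℤ)^d
  have e5 : (-1:ℤ)^(d-k) = b * a := by
    have := e2
    calc (-1:ℤ)^(d-k) = (-1:ℤ)^(d-k) * (a * a) := by rw [e1, mul_one]
      _ = ((-1:ℤ)^(d-k) * a) * a := by ring
      _ = b * a := by rw [e2]
  rw [e3, e5] at key3
  rw [e4]
  -- key3 : S * (a * -1) - cf k * (a * (a * -1)) = cf k * (1 + b * a)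
  linear_combination (-a) * key3 + (-S + a * cf k - b * cf k) * e1

lemma T0_eq
    {V : Type*} [Fintype V] [DecidableEq V] (d : ℕ)
    (Δ : Finset (Finset V))
    (hne : ∀ s ∈ Δ, s.Nonempty)
    (hdim : ∀ s ∈ Δ, s.card ≤ d + 1)
    (f : ℕ → ℤ)
    (hf : ∀ j : ℕ, f j = if j = 0 then 1 else ((Δ.filter (fun s => s.card = j)).card : ℤ))
    (χ : ℤ)
    (hχ : χ = ∑ s ∈ Δ, (-1 : ℤ) ^ (s.card - 1)) :
    ∑ j ∈ Finset.range (d+2), (-1:ℤ)^j * f j = 1 - χ := by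
  have hcard : ∀ s ∈ Δ, 1 ≤ s.card := fun s hs => Finset.card_pos.mpr (hne s hs)
  have hχ2 : χ = -∑ s ∈ Δ, (-1:ℤ)^s.card := by
    rw [hχ, ← Finset.sum_neg_distrib]
    refine Finset.sum_congr rfl fun s hs => ?_
    rw [neg_one_pow_sub' _ _ (hcard s hs)]
    ring
  have hfib : ∑ s ∈ Δ, (-1:ℤ)^s.card
      = ∑ j ∈ Finset.range (d+2), ((Δ.filter (fun s => s.card = j)).card : ℤ) * (-1)^j := by
    rw [← Finset.sum_fiberwise_of_maps_to (g := fun s => s.card) (t := Finset.range (d+2))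
      (fun s hs => Finset.mem_range.mpr (Nat.lt_succ_of_le (hdim s hs)))]
    refine Finset.sum_congr rfl fun j hj => ?_
    rw [Finset.sum_congr rfl (g := fun s => (-1:ℤ)^j)
      (fun s hs => by rw [(Finset.mem_filter.mp hs).2]), Finset.sum_const, nsmul_eq_mul]
  have h0 : ((Δ.filter (fun s => s.card = 0)).card : ℤ) = 0 := by
    have : (Δ.filter (fun s => s.card = 0)) = ∅ := by
      rw [Finset.filter_eq_empty_iff]
      intro s hs hc
      have := hcard s hs; omega
    rw [this]; simp
  have hsplit : ∑ j ∈ Finset.range (d+2), (-1:ℤ)^j * f j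
      = 1 + ∑ j ∈ Finset.range (d+2), ((Δ.filter (fun s => s.card = j)).card : ℤ) * (-1)^j := by
    rw [Finset.sum_congr rfl (g := fun j => (if j = 0 then (1:ℤ) else 0)
        + ((Δ.filter (fun s => s.card = j)).card : ℤ) * (-1)^j) (fun j hj => by
      by_cases hc : j = 0
      · subst hc; rw [hf]; simp only [eq_self_iff_true, if_true, pow_zero, one_mul, mul_one, h0]; ring
      · rw [hf]; simp [hc]; ring), Finset.sum_add_distrib]
    congr 1
    simp
  rw [hsplit, ← hfib, hχ2]
  ring

lemma claim_y (d : ℕ) (f : ℕ → ℤ) (hf0 : f 0 = 1) (χ : ℤ)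
    (hT0 : ∑ j ∈ Finset.range (d+2), (-1:ℤ)^j * f j = 1 - χ)
    (hTk : ∀ k, 1 ≤ k → k ≤ d+1 →
      ∑ j ∈ Finset.range (d+2), (-1:ℤ)^j * (j.choose k) * f j = (-1)^(d+1) * f k)
    (y : ℚ) :
    (∑ j ∈ Finset.range (d+2), (f j : ℚ) * y^j)
      - (-1:ℚ)^(d+1) * ∑ j ∈ Finset.range (d+2), (f j:ℚ) * (-1-y)^j
    = (-1:ℚ)^(d+1) * ((χ:ℚ) - (1 + (-1:ℚ)^d)) := by
  have hexp : ∀ j ∈ Finset.range (d+2), (f j:ℚ) * (-1-y)^j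
      = ∑ k ∈ Finset.range (d+2), (-1:ℚ)^j * (j.choose k) * (f j) * y^k := by
    intro j hj
    rw [Finset.mem_range] at hj
    have h1 : ((-1:ℚ)-y)^j = (-1)^j * (y+1)^j := by
      rw [show ((-1:ℚ) - y) = -(y+1) by ring, neg_pow]
    have h2 : (y+1:ℚ)^j = ∑ k ∈ Finset.range (d+2), (j.choose k : ℚ) * y^k := by
      rw [add_pow]
      rw [Finset.sum_subset (Finset.range_subset_range.mpr (by omega : j + 1 ≤ d + 2))]
      · exact Finset.sum_congr rfl fun k hk => by ring
      · intro k hk hk2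
        rw [Finset.mem_range, Nat.lt_succ] at hk2
        rw [Nat.choose_eq_zero_of_lt (by omega), Nat.cast_zero]
        ring
    rw [h1, h2]
    simp only [Finset.mul_sum]
    exact Finset.sum_congr rfl fun k hk => by ring
  rw [Finset.sum_congr rfl hexp, Finset.sum_comm]
  have hTQ : ∀ k ∈ Finset.range (d+2),
      ∑ j ∈ Finset.range (d+2), (-1:ℚ)^j * (j.choose k) * (f j) * y^k
      = ((-1:ℚ)^(d+1) * (f k) + (if k = 0 then (1:ℚ) - χ - (-1:ℚ)^(d+1) else 0)) * y^k := by
    intro k hk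
    rw [Finset.mem_range] at hk
    rw [← Finset.sum_mul]
    congr 1
    by_cases hk0 : k = 0
    · subst hk0
      have hc := congrArg (fun z : ℤ => (z : ℚ)) hT0
      push_cast at hc
      simp only [Nat.choose_zero_right, Nat.cast_one, mul_one, if_true, eq_self_iff_true]
      rw [hc, hf0]
      push_cast
      ring
    · have hc := congrArg (fun z : ℤ => (z:ℚ)) (hTk k (by omega) (by omega))
      push_cast at hc
      rw [hc]
      simp [hk0]
  rw [Finset.sum_congr rfl hTQ]
  have hsplit : ∑ k ∈ Finset.range (d+2),
      ((-1:ℚ)^(d+1) * (f k) + (if k = 0 then (1:ℚ) - χ - (-1:ℚ)^(d+1) else 0)) * y^k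
      = (-1:ℚ)^(d+1) * (∑ k ∈ Finset.range (d+2), (f k : ℚ) * y^k)
        + ((1:ℚ) - χ - (-1:ℚ)^(d+1)) := by
    rw [Finset.sum_congr rfl (g := fun k => (-1:ℚ)^(d+1) * ((f k : ℚ) * y^k)
        + (if k = 0 then ((1:ℚ) - χ - (-1:ℚ)^(d+1)) else 0))
      (fun k hk => by by_cases hk0 : k = 0 <;> simp [hk0] <;> ring),
      Finset.sum_add_distrib, ← Finset.mul_sum]
    congr 1
    simp
  rw [hsplit]
  set S := ∑ k ∈ Finset.range (d+2), (f k : ℚ) * y^k with hS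
  have h1 : (-1:ℚ)^(d+1) = -(-1:ℚ)^d := by rw [pow_succ]; ring
  have h2 : ((-1:ℚ)^d) * ((-1:ℚ)^d) = 1 := by
    rw [← pow_add, ← two_mul]; exact Even.neg_one_pow ⟨d, by ring⟩
  rw [h1]
  linear_combination (-S) * h2

lemma powinv {a : ℚ} (ha : a ≠ 0) {m n : ℕ} (hn : n ≤ m) : a^m * (a⁻¹)^n = a^(m-n) := by
  have : a^m = a^(m-n) * a^n := by rw [← pow_add]; congr 1; omega
  rw [this, mul_assoc, ← mul_pow, mul_inv_cancel₀ ha, one_pow, mul_one]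

lemma neg_one_pow_subQ (a b : ℕ) (hb : b ≤ a) : (-1:ℚ)^(a-b) = (-1)^a * (-1)^b := by
  have h1 : (-1:ℚ)^(a-b) * (-1)^b = (-1)^a := by rw [← pow_add]; congr 1; omega
  have hb2 : ((-1:ℚ))^b * (-1)^b = 1 := by
    rw [← pow_add, ← two_mul]; exact Even.neg_one_pow ⟨b, by ring⟩
  calc (-1:ℚ)^(a-b) = (-1:ℚ)^(a-b) * ((-1)^b * (-1)^b) := by rw [hb2, mul_one]
    _ = (-1)^a * (-1)^b := by rw [← mul_assoc, h1]

lemma key_rel (d : ℕ) (f : ℕ → ℤ) (hf0 : f 0 = 1) (χ : ℤ)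
    (hT0 : ∑ j ∈ Finset.range (d+2), (-1:ℤ)^j * f j = 1 - χ)
    (hTk : ∀ k, 1 ≤ k → k ≤ d+1 →
      ∑ j ∈ Finset.range (d+2), (-1:ℤ)^j * (j.choose k) * f j = (-1)^(d+1) * f k)
    (h : ℕ → ℤ)
    (hh : ∑ i ∈ Finset.range (d + 2), C (h i) * X ^ (d + 1 - i)
        = ∑ j ∈ Finset.range (d + 2), C (f j) * (X - 1 : ℤ[X]) ^ (d + 1 - j)) :
    ∀ i ≤ d + 1, h i - h (d+1-i)
      = (χ - (1 + (-1:ℤ)^d)) * (-1:ℤ)^(d+1-i) * ((d+1).choose i : ℤ) := by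
  set E : ℚ := (χ:ℚ) - (1 + (-1:ℚ)^d) with hE
  -- evaluated form of hh over ℚ
  have E1 : ∀ x : ℚ, ∑ i ∈ Finset.range (d+2), (h i : ℚ) * x^(d+1-i)
      = ∑ j ∈ Finset.range (d+2), (f j : ℚ) * (x-1)^(d+1-j) := by
    intro x
    have := congrArg (fun p => Polynomial.eval x (Polynomial.map (Int.castRingHom ℚ) p)) hh
    simpa [Polynomial.eval_finset_sum, Polynomial.map_sum] using this
  have E2 : ∀ x : ℚ, x ≠ 0 → ∑ i ∈ Finset.range (d+2), (h i : ℚ) * x^i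
      = ∑ j ∈ Finset.range (d+2), (f j : ℚ) * x^j * (1-x)^(d+1-j) := by
    intro x hx
    have e := congrArg (fun z => x^(d+1) * z) (E1 x⁻¹)
    simp only [Finset.mul_sum] at e
    calc ∑ i ∈ Finset.range (d+2), (h i : ℚ) * x^i
        = ∑ i ∈ Finset.range (d+2), x^(d+1) * ((h i : ℚ) * (x⁻¹)^(d+1-i)) := by
          refine Finset.sum_congr rfl fun i hi => ?_
          rw [Finset.mem_range] at hi
          rw [show x^(d+1) * ((h i : ℚ) * (x⁻¹)^(d+1-i)) = (h i:ℚ) * (x^(d+1) * (x⁻¹)^(d+1-i)) by ring,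
            powinv hx (by omega), show d+1-(d+1-i) = i by omega]
      _ = ∑ j ∈ Finset.range (d+2), x^(d+1) * ((f j : ℚ) * (x⁻¹-1)^(d+1-j)) := e
      _ = ∑ j ∈ Finset.range (d+2), (f j : ℚ) * x^j * (1-x)^(d+1-j) := by
          refine Finset.sum_congr rfl fun j hj => ?_
          rw [Finset.mem_range] at hj
          have hsplit : x^(d+1) = x^j * x^(d+1-j) := by rw [← pow_add]; congr 1; omega
          rw [hsplit]
          have : x^(d+1-j) * (x⁻¹-1)^(d+1-j) = (1-x)^(d+1-j) := by
            rw [← mul_pow]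
            congr 1
            field_simp
          calc x^j * x^(d+1-j) * ((f j : ℚ) * (x⁻¹-1)^(d+1-j))
              = (f j:ℚ) * x^j * (x^(d+1-j) * (x⁻¹-1)^(d+1-j)) := by ring
            _ = (f j : ℚ) * x^j * (1-x)^(d+1-j) := by rw [this]
  -- the main evaluated identity
  have E4 : ∀ x : ℚ, x ≠ 0 → x ≠ 1 →
      (∑ i ∈ Finset.range (d+2), (h i : ℚ) * x^(d+1-i))
        - ∑ i ∈ Finset.range (d+2), (h i : ℚ) * x^i = E * (1-x)^(d+1) := by
    intro x hx0 hx1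
    rw [E1 x, E2 x hx0]
    have hx1' : x - 1 ≠ 0 := fun hc => hx1 (by linarith)
    have hcl := claim_y d f hf0 χ hT0 hTk (x-1)⁻¹
    have t1 : ∀ j ∈ Finset.range (d+2), (f j : ℚ) * (x-1)^(d+1-j)
        = (x-1)^(d+1) * ((f j : ℚ) * ((x-1)⁻¹)^j) := by
      intro j hj
      rw [Finset.mem_range] at hj
      rw [show (x-1)^(d+1) * ((f j : ℚ) * ((x-1)⁻¹)^j)
          = (f j:ℚ) * ((x-1)^(d+1) * ((x-1)⁻¹)^j) by ring, powinv hx1' (by omega)]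
    have t2 : ∀ j ∈ Finset.range (d+2), (f j : ℚ) * x^j * (1-x)^(d+1-j)
        = (x-1)^(d+1) * ((-1:ℚ)^(d+1) * ((f j : ℚ) * (-1-(x-1)⁻¹)^j)) := by
      intro j hj
      rw [Finset.mem_range] at hj
      have hy : (-1 - (x-1)⁻¹ : ℚ) = -x * (x-1)⁻¹ := by field_simp; ring
      rw [hy, mul_pow, show (x-1)^(d+1) * ((-1:ℚ)^(d+1) * ((f j:ℚ) * ((-x)^j * ((x-1)⁻¹)^j)))
          = (-1:ℚ)^(d+1) * (f j:ℚ) * (-x)^j * ((x-1)^(d+1) * ((x-1)⁻¹)^j) by ring,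
        powinv hx1' (by omega)]
      have hnx : (-x:ℚ)^j = (-1)^j * x^j := by rw [neg_pow]
      have h1x : ((1:ℚ)-x)^(d+1-j) = (-1)^(d+1-j) * (x-1)^(d+1-j) := by
        rw [show ((1:ℚ)-x) = -(x-1) by ring, neg_pow]
      rw [hnx, h1x, neg_one_pow_subQ (d+1) j (by omega)]
      ring
    calc (∑ j ∈ Finset.range (d+2), (f j : ℚ) * (x-1)^(d+1-j))
          - ∑ j ∈ Finset.range (d+2), (f j : ℚ) * x^j * (1-x)^(d+1-j)
        = (∑ j ∈ Finset.range (d+2), (x-1)^(d+1) * ((f j : ℚ) * ((x-1)⁻¹)^j))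
          - ∑ j ∈ Finset.range (d+2), (x-1)^(d+1) * ((-1:ℚ)^(d+1) * ((f j : ℚ) * (-1-(x-1)⁻¹)^j)) := by
          rw [Finset.sum_congr rfl t1, Finset.sum_congr rfl t2]
      _ = (x-1)^(d+1) * ((∑ j ∈ Finset.range (d+2), (f j : ℚ) * ((x-1)⁻¹)^j)
            - (-1:ℚ)^(d+1) * ∑ j ∈ Finset.range (d+2), (f j : ℚ) * (-1-(x-1)⁻¹)^j) := by
          rw [mul_sub]
          simp only [Finset.mul_sum]
      _ = (x-1)^(d+1) * ((-1:ℚ)^(d+1) * ((χ:ℚ) - (1 + (-1:ℚ)^d))) := by rw [hcl]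
      _ = E * (1-x)^(d+1) := by
          rw [← hE, show ((1:ℚ)-x)^(d+1) = (-1:ℚ)^(d+1) * (x-1)^(d+1) by
            rw [← neg_pow]; congr 1; ring]
          ring
  -- the polynomial identity
  have hbin : ((1:ℚ[X]) - X)^(d+1)
      = ∑ m ∈ Finset.range (d+2), C ((-1:ℚ)^m * ((d+1).choose m)) * X^m := by
    rw [show ((1:ℚ[X]) - X) = -X + 1 by ring, add_pow]
    refine Finset.sum_congr rfl fun m hm => ?_
    rw [one_pow, mul_one, neg_pow,
      show ((d+1).choose m : ℚ[X]) = C (((d+1).choose m : ℚ)) by rw [Polynomial.C_eq_natCast],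
      show ((-1:ℚ[X])^m) = C ((-1:ℚ)^m) by rw [map_pow, map_neg, map_one], map_mul]
    ring
  have hPQ : ((∑ i ∈ Finset.range (d+2), C ((h i : ℚ)) * X^(d+1-i))
        - ∑ i ∈ Finset.range (d+2), C ((h i : ℚ)) * X^i)
      = C E * ((1:ℚ[X])-X)^(d+1) := by
    apply Polynomial.eq_of_infinite_eval_eq
    apply Set.Infinite.mono (s := ({0,1} : Set ℚ)ᶜ) ?_ ?_
    · intro x hx
      simp only [Set.mem_compl_iff, Set.mem_insert_iff, Set.mem_singleton_iff, not_or] at hx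
      obtain ⟨hx0, hx1⟩ := hx
      show Polynomial.eval x _ = Polynomial.eval x _
      simp only [Polynomial.eval_sub, Polynomial.eval_finset_sum, Polynomial.eval_mul,
        Polynomial.eval_C, Polynomial.eval_pow, Polynomial.eval_X, Polynomial.eval_one]
      exact E4 x hx0 hx1
    · exact Set.Finite.infinite_compl (by simp)
  intro i hi
  have hco := congrArg (fun p => Polynomial.coeff p (d+1-i)) hPQ
  simp only [Polynomial.coeff_sub] at hco
  have c1 : Polynomial.coeff (∑ i' ∈ Finset.range (d+2), C ((h i' : ℚ)) * X^(d+1-i')) (d+1-i)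
      = (h i : ℚ) := by
    rw [Polynomial.finset_sum_coeff, Finset.sum_eq_single i]
    · rw [Polynomial.coeff_C_mul, Polynomial.coeff_X_pow, if_pos rfl, mul_one]
    · intro b hb hbne
      rw [Finset.mem_range] at hb
      rw [Polynomial.coeff_C_mul, Polynomial.coeff_X_pow, if_neg (by omega), mul_zero]
    · intro habs; exact absurd (Finset.mem_range.mpr (by omega)) habs
  have c2 : Polynomial.coeff (∑ i' ∈ Finset.range (d+2), C ((h i' : ℚ)) * X^i') (d+1-i)
      = (h (d+1-i) : ℚ) := by
    rw [Polynomial.finset_sum_coeff, Finset.sum_eq_single (d+1-i)]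
    · rw [Polynomial.coeff_C_mul, Polynomial.coeff_X_pow, if_pos rfl, mul_one]
    · intro b hb hbne
      rw [Polynomial.coeff_C_mul, Polynomial.coeff_X_pow, if_neg (fun hc => hbne hc.symm), mul_zero]
    · intro habs; exact absurd (Finset.mem_range.mpr (by omega)) habs
  have c3 : Polynomial.coeff (C E * ((1:ℚ[X])-X)^(d+1)) (d+1-i)
      = E * ((-1:ℚ)^(d+1-i) * ((d+1).choose i : ℚ)) := by
    rw [Polynomial.coeff_C_mul, hbin, Polynomial.finset_sum_coeff, Finset.sum_eq_single (d+1-i)]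
    · rw [Polynomial.coeff_C_mul, Polynomial.coeff_X_pow, if_pos rfl, mul_one,
        Nat.choose_symm hi]
    · intro b hb hbne
      rw [Polynomial.coeff_C_mul, Polynomial.coeff_X_pow, if_neg (fun hc => hbne hc.symm), mul_zero]
    · intro habs; exact absurd (Finset.mem_range.mpr (by omega)) habs
  rw [c1, c2, c3] at hco
  have hgoal : ((h i : ℚ) - (h (d+1-i) : ℚ))
      = ((χ:ℚ) - (1 + (-1:ℚ)^d)) * (-1:ℚ)^(d+1-i) * ((d+1).choose i : ℚ) := by
    rw [hco, hE]; ring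
  exact_mod_cast hgoal

/-- **Generalized Dehn–Sommerville relations** (Klee).
`Δ` is a simplicial complex (a downward-closed family of nonempty finite sets of
vertices) triangulating a closed `d`-dimensional manifold `X`; the manifold
condition is expressed combinatorially: `Δ` is pure of dimension `d` and the
link of every face `s` has the Euler characteristic of a sphere of dimension
`d - card s`.  `f j` denotes the number of faces of dimension `j - 1` (so
`f 0 = f₋₁ = 1`), `χ` is the (topological = combinatorial) Euler characteristic
of `X`, and the `h`-vector is defined by the polynomial identity
`∑ i, h i * x^(d+1-i) = ∑ j, f j * (x-1)^(d+1-j)`.  Then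
`h (d+1-i) - h i = (-1)^i * (d+1).choose i * (χ X - χ (S^d))` for `0 ≤ i ≤ d+1`. -/
theorem generalized_dehn_sommerville
    {V : Type*} [Fintype V] [DecidableEq V] (d : ℕ)
    (Δ : Finset (Finset V))
    (hne : ∀ s ∈ Δ, s.Nonempty)
    (hdown : ∀ s ∈ Δ, ∀ t : Finset V, t ⊆ s → t.Nonempty → t ∈ Δ)
    (hdim : ∀ s ∈ Δ, s.card ≤ d + 1)
    (hpure : ∀ s ∈ Δ, ∃ m ∈ Δ, s ⊆ m ∧ m.card = d + 1)
    -- each link has the Euler characteristic of a sphere of the right dimension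
    (hlink : ∀ s ∈ Δ, s.card ≤ d →
      (∑ t ∈ Δ.filter (fun t => Disjoint s t ∧ s ∪ t ∈ Δ), (-1 : ℤ) ^ (t.card - 1))
        = 1 + (-1) ^ (d - s.card))
    (f : ℕ → ℤ)
    (hf : ∀ j : ℕ, f j = if j = 0 then 1 else ((Δ.filter (fun s => s.card = j)).card : ℤ))
    (χ : ℤ)
    (hχ : χ = ∑ s ∈ Δ, (-1 : ℤ) ^ (s.card - 1))
    (h : ℕ → ℤ)
    (hh : ∑ i ∈ Finset.range (d + 2), C (h i) * X ^ (d + 1 - i)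
        = ∑ j ∈ Finset.range (d + 2), C (f j) * (X - 1 : ℤ[X]) ^ (d + 1 - j)) :
    ∀ i ≤ d + 1,
      h (d + 1 - i) - h i
        = (-1 : ℤ) ^ i * ((d + 1).choose i : ℤ) * (χ - (1 + (-1 : ℤ) ^ d)) := by
  have hf0 : f 0 = 1 := by rw [hf]; simp
  have hT0 := T0_eq d Δ hne hdim f hf χ hχ
  have hTk : ∀ k, 1 ≤ k → k ≤ d+1 →
      ∑ j ∈ Finset.range (d+2), (-1:ℤ)^j * (j.choose k) * f j = (-1)^(d+1) * f k := by
    intro k hk1 hk2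
    rcases Nat.lt_or_ge k (d+1) with hlt | hge
    · exact Tk_eq d Δ hne hdown hdim hlink f hf k hk1 (by omega)
    · have hkd : k = d+1 := by omega
      subst hkd
      rw [Finset.sum_eq_single (d+1)]
      · rw [Nat.choose_self, Nat.cast_one, mul_one]
      · intro b hb hbne
        rw [Finset.mem_range] at hb
        rw [Nat.choose_eq_zero_of_lt (by omega), Nat.cast_zero, mul_zero, zero_mul]
      · intro habs; exact absurd (Finset.mem_range.mpr (by omega)) habs
  have KEY := key_rel d f hf0 χ hT0 hTk h hh
  intro i hi
  have K := KEY i hi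
  have K0 := KEY 0 (by omega)
  have K1 := KEY (d+1) (by omega)
  simp only [Nat.sub_zero, Nat.choose_zero_right, Nat.choose_self, Nat.sub_self, pow_zero,
    Nat.cast_one, mul_one, one_mul] at K0 K1
  have hE0 : (χ - (1 + (-1:ℤ)^d)) * ((-1:ℤ)^(d+1) + 1) = 0 := by linear_combination -K0 - K1
  have hb : (-1:ℤ)^i * (-1)^i = 1 := by
    rw [← pow_add, ← two_mul]; exact Even.neg_one_pow ⟨i, by ring⟩
  have hpow : (-1:ℤ)^(d+1-i) * (-1)^i = (-1)^(d+1) := by rw [← pow_add]; congr 1; omega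
  have ha : (-1:ℤ)^(d+1-i) = (-1)^(d+1) * (-1)^i := by
    calc (-1:ℤ)^(d+1-i) = (-1:ℤ)^(d+1-i) * ((-1)^i * (-1)^i) := by rw [hb, mul_one]
      _ = ((-1:ℤ)^(d+1-i) * (-1)^i) * (-1)^i := by ring
      _ = (-1)^(d+1) * (-1)^i := by rw [hpow]
  rw [ha] at K
  linear_combination (-1) * K + (-((-1:ℤ)^i * ((d+1).choose i : ℤ))) * hE0
end

section
/- Suppose a triangulation of the quaternionic projective plane HP^2 (dimension 8, Euler characteristic 3) has 15 vertices and contains all possible faces of dimension at most 4, i.e. f_k = binom(15, k+1) for 0 \le k \le 4. Then the generalized Dehn–Sommerville equations force f_5 = 4515, f_6 = 4230, f_7 = 2205, f_8 = 490. -/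
set_option maxHeartbeats 4000000


open Polynomial

/-- For a 15-vertex triangulation of `HP²` (a closed 8-manifold with Euler
characteristic 3) containing all faces of dimension at most 4, i.e. with
`f (k+1) = binom(15,k+1)` for `0 ≤ k ≤ 4` (here `f j` counts faces of
dimension `j-1` and `f 0 = f₋₁ = 1`), the generalized Dehn–Sommerville
equations `h (9-i) - h i = (-1)^i * binom(9,i) * (χ - 2)` with `χ = 3`,
where `∑ i, h i * x^(9-i) = ∑ j, f j * (x-1)^(9-j)`, force
`f_5 = 4515`, `f_6 = 4230`, `f_7 = 2205`, `f_8 = 490`. -/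
theorem hp2_face_numbers (f h : ℕ → ℤ)
    (hf : ∀ j ≤ 5, f j = (Nat.choose 15 j : ℤ))
    (hpoly : ∑ i ∈ Finset.range 10, C (h i) * X ^ (9 - i)
        = ∑ j ∈ Finset.range 10, C (f j) * (X - 1 : ℤ[X]) ^ (9 - j))
    (hDS : ∀ i ≤ 9, h (9 - i) - h i
        = (-1 : ℤ) ^ i * (Nat.choose 9 i : ℤ) * ((3 : ℤ) - 2)) :
    f 6 = 4515 ∧ f 7 = 4230 ∧ f 8 = 2205 ∧ f 9 = 490 := by
  have hf0 := hf 0 (by norm_num)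
  have hf1 := hf 1 (by norm_num)
  have hf2 := hf 2 (by norm_num)
  have hf3 := hf 3 (by norm_num)
  have hf4 := hf 4 (by norm_num)
  have hf5 := hf 5 (by norm_num)
  norm_num [Nat.choose] at hf0 hf1 hf2 hf3 hf4 hf5
  have d0 := hDS 0 (by norm_num)
  have d1 := hDS 1 (by norm_num)
  have d2 := hDS 2 (by norm_num)
  have d3 := hDS 3 (by norm_num)
  have d4 := hDS 4 (by norm_num)
  norm_num [Nat.choose] at d0 d1 d2 d3 d4
  have e0 := congrArg (eval (0:ℤ)) hpoly
  simp only [eval_finset_sum, eval_mul, eval_pow, eval_C, eval_X, eval_sub, eval_one,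
    Finset.sum_range_succ, Finset.sum_range_zero] at e0
  norm_num at e0
  have e1 := congrArg (eval (1:ℤ)) hpoly
  simp only [eval_finset_sum, eval_mul, eval_pow, eval_C, eval_X, eval_sub, eval_one,
    Finset.sum_range_succ, Finset.sum_range_zero] at e1
  norm_num at e1
  have e2 := congrArg (eval (2:ℤ)) hpoly
  simp only [eval_finset_sum, eval_mul, eval_pow, eval_C, eval_X, eval_sub, eval_one,
    Finset.sum_range_succ, Finset.sum_range_zero] at e2
  norm_num at e2
  have e3 := congrArg (eval (3:ℤ)) hpoly
  simp only [eval_finset_sum, eval_mul, eval_pow, eval_C, eval_X, eval_sub, eval_one,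
    Finset.sum_range_succ, Finset.sum_range_zero] at e3
  norm_num at e3
  have e4 := congrArg (eval (4:ℤ)) hpoly
  simp only [eval_finset_sum, eval_mul, eval_pow, eval_C, eval_X, eval_sub, eval_one,
    Finset.sum_range_succ, Finset.sum_range_zero] at e4
  norm_num at e4
  have e5 := congrArg (eval (5:ℤ)) hpoly
  simp only [eval_finset_sum, eval_mul, eval_pow, eval_C, eval_X, eval_sub, eval_one,
    Finset.sum_range_succ, Finset.sum_range_zero] at e5
  norm_num at e5
  have e6 := congrArg (eval (6:ℤ)) hpoly
  simp only [eval_finset_sum, eval_mul, eval_pow, eval_C, eval_X, eval_sub, eval_one,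
    Finset.sum_range_succ, Finset.sum_range_zero] at e6
  norm_num at e6
  have e7 := congrArg (eval (7:ℤ)) hpoly
  simp only [eval_finset_sum, eval_mul, eval_pow, eval_C, eval_X, eval_sub, eval_one,
    Finset.sum_range_succ, Finset.sum_range_zero] at e7
  norm_num at e7
  have e8 := congrArg (eval (8:ℤ)) hpoly
  simp only [eval_finset_sum, eval_mul, eval_pow, eval_C, eval_X, eval_sub, eval_one,
    Finset.sum_range_succ, Finset.sum_range_zero] at e8
  norm_num at e8
  have e9 := congrArg (eval (9:ℤ)) hpoly
  simp only [eval_finset_sum, eval_mul, eval_pow, eval_C, eval_X, eval_sub, eval_one,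
    Finset.sum_range_succ, Finset.sum_range_zero] at e9
  norm_num at e9
  have k6 : (181440 : ℤ) * f 6 = 181440 * 4515 := by
    linear_combination (366565 : ℤ) * e0 + (-2329326 : ℤ) * e1 + (6893064 : ℤ) * e2 + (-12494748 : ℤ) * e3 + (15202530 : ℤ) * e4 + (-12756240 : ℤ) * e5 + (7318416 : ℤ) * e6 + (-2751444 : ℤ) * e7 + (612513 : ℤ) * e8 + (-61330 : ℤ) * e9 + (-30481920 : ℤ) * hf0 + (15240960 : ℤ) * hf1 + (-7620480 : ℤ) * hf2 + (3810240 : ℤ) * hf3 + (-1814400 : ℤ) * hf4 + (725760 : ℤ) * hf5 + (181440 : ℤ) * d3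
  have k7 : (20160 : ℤ) * f 7 = 20160 * 4230 := by
    linear_combination (56990 : ℤ) * e0 + (-444181 : ℤ) * e1 + (1450984 : ℤ) * e2 + (-2752708 : ℤ) * e3 + (3424820 : ℤ) * e4 + (-2911790 : ℤ) * e5 + (1685096 : ℤ) * e6 + (-637444 : ℤ) * e7 + (142558 : ℤ) * e8 + (-14325 : ℤ) * e9 + (-8709120 : ℤ) * hf0 + (4354560 : ℤ) * hf1 + (-2096640 : ℤ) * hf2 + (967680 : ℤ) * hf3 + (-403200 : ℤ) * hf4 + (120960 : ℤ) * hf5 + (20160 : ℤ) * d2 + (60480 : ℤ) * d3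
  have k8 : (120960 : ℤ) * f 8 = 120960 * 2205 := by
    linear_combination (292957 : ℤ) * e0 + (-1760292 : ℤ) * e1 + (5803476 : ℤ) * e2 + (-11431056 : ℤ) * e3 + (14504742 : ℤ) * e4 + (-12478872 : ℤ) * e5 + (7278852 : ℤ) * e6 + (-2768976 : ℤ) * e7 + (621861 : ℤ) * e8 + (-62692 : ℤ) * e9 + (-45722880 : ℤ) * hf0 + (22861440 : ℤ) * hf1 + (-10765440 : ℤ) * hf2 + (4717440 : ℤ) * hf3 + (-1814400 : ℤ) * hf4 + (483840 : ℤ) * hf5 + (120960 : ℤ) * d1 + (241920 : ℤ) * d2 + (362880 : ℤ) * d3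
  have k9 : (362880 : ℤ) * f 9 = 362880 * 490 := by
    linear_combination (223300 : ℤ) * e0 + (-1944261 : ℤ) * e1 + (5078808 : ℤ) * e2 + (-9733836 : ℤ) * e3 + (12272400 : ℤ) * e4 + (-10536750 : ℤ) * e5 + (6141576 : ℤ) * e6 + (-2335788 : ℤ) * e7 + (524556 : ℤ) * e8 + (-52885 : ℤ) * e9 + (-40642560 : ℤ) * hf0 + (20321280 : ℤ) * hf1 + (-9434880 : ℤ) * hf2 + (3991680 : ℤ) * hf3 + (-1451520 : ℤ) * hf4 + (362880 : ℤ) * hf5 + (362880 : ℤ) * d0 + (362880 : ℤ) * d1 + (362880 : ℤ) * d2 + (362880 : ℤ) * d3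
  exact ⟨mul_left_cancel₀ (by norm_num) k6, mul_left_cancel₀ (by norm_num) k7,
    mul_left_cancel₀ (by norm_num) k8, mul_left_cancel₀ (by norm_num) k9⟩
end

section
/- If a triangulation of a 2a-dimensional closed manifold has N = 3a+3 vertices and satisfies the duality property (a face of dimension a+j is in the triangulation iff its complementary face of dimension 2a-j+1 is not, for all j \ge 0), then every subset of at most a+1 vertices is a face (tightness). -/
open Finset

/-- **Duality implies tightness.**  Let `Δ` be a simplicial complex on a vertex
set `V` with `|V| = 3a+3` whose faces have dimension at most `2a`
(cardinality at most `2a+1`).  If `Δ` satisfies duality — for every subset `S`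
of cardinality `a+j+1` with `j ≥ 0`, `S` is a face iff its complement (of
dimension `2a-j+1`) is not a face — then every nonempty subset of at most
`a+1` vertices is a face of `Δ` (tightness). -/
theorem duality_implies_tightness
    {V : Type*} [Fintype V] [DecidableEq V] (a : ℕ) (ha : 1 ≤ a)
    (hV : Fintype.card V = 3 * a + 3)
    (Δ : Finset (Finset V))
    (hdown : ∀ s ∈ Δ, ∀ t : Finset V, t ⊆ s → t.Nonempty → t ∈ Δ)
    (hdim : ∀ s ∈ Δ, s.card ≤ 2 * a + 1)
    (hdual : ∀ S : Finset V, a + 1 ≤ S.card → (S ∈ Δ ↔ Sᶜ ∉ Δ)) :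
    ∀ S : Finset V, S.Nonempty → S.card ≤ a + 1 → S ∈ Δ := by
  intro S hSne hScard
  obtain ⟨T, hST, hT⟩ := Finset.exists_superset_card_eq hScard
    (by omega : a + 1 ≤ Fintype.card V)
  have hTΔ : T ∈ Δ := by
    by_contra hT'
    have := (hdual T (by omega)).not.mp (by simpa using hT')
    rw [not_not] at this
    have hc := hdim _ this
    rw [Finset.card_compl, hT, hV] at hc
    omega
  exact hdown T hTΔ S hST hSne
end

section
/- For a = 1 and all n \ge 2, the alternating sum \sum_{k=0}^{n} (-1)^k f_k^{1,n}, where f_k^{1,n} = (1/2) binom(n+k+2, k+1) binom(n+1, k+1), equals 1 if n is even and 0 if n is odd. -/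
open Finset

lemma lemA (m i : ℕ) (hi : i ≤ m) :
    ∑ j ∈ Finset.range (m + 1),
        (-1 : ℚ) ^ j * (Nat.choose m j : ℚ) * (Nat.choose j i : ℚ)
      = (-1 : ℚ) ^ m * (if i = m then 1 else 0) := by
  have hsplit : Finset.range (m + 1) = Finset.Ico 0 i ∪ Finset.Ico i (m + 1) := by
    rw [Finset.range_eq_Ico, Finset.Ico_union_Ico_eq_Ico (Nat.zero_le _) (by omega)]
  rw [hsplit, Finset.sum_union (by
    simp [Finset.disjoint_left]
    omega)]
  have h1 : ∑ j ∈ Finset.Ico 0 i, (-1 : ℚ) ^ j * (Nat.choose m j : ℚ) * (Nat.choose j i : ℚ) = 0 := by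
    apply Finset.sum_eq_zero
    intro j hj
    simp only [Finset.mem_Ico] at hj
    rw [Nat.choose_eq_zero_of_lt hj.2]
    simp
  rw [h1, zero_add, Finset.sum_Ico_eq_sum_range]
  have h2 : ∀ l ∈ Finset.range (m + 1 - i),
      (-1 : ℚ) ^ (i + l) * (Nat.choose m (i + l) : ℚ) * (Nat.choose (i + l) i : ℚ)
        = (-1 : ℚ) ^ i * (Nat.choose m i : ℚ) * ((-1 : ℚ) ^ l * (Nat.choose (m - i) l : ℚ)) := by
    intro l hl
    simp only [Finset.mem_range] at hl
    have hkn : i + l ≤ m := by omega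
    have hsk : i ≤ i + l := Nat.le_add_right _ _
    have := Nat.choose_mul (n := m) hsk
    rw [Nat.add_sub_cancel_left] at this
    have hc : (Nat.choose m (i + l) : ℚ) * (Nat.choose (i + l) i : ℚ)
        = (Nat.choose m i : ℚ) * (Nat.choose (m - i) l : ℚ) := by
      exact_mod_cast congrArg (fun x : ℕ => (x : ℚ)) this
    rw [pow_add]
    linear_combination ((-1 : ℚ) ^ i * (-1 : ℚ) ^ l) * hc
  rw [Finset.sum_congr rfl h2, ← Finset.mul_sum]
  have h3 : ∑ l ∈ Finset.range (m + 1 - i), (-1 : ℚ) ^ l * (Nat.choose (m - i) l : ℚ)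
      = if m - i = 0 then 1 else 0 := by
    have hmi : m + 1 - i = (m - i) + 1 := by omega
    rw [hmi]
    rcases eq_or_ne (m - i) 0 with h0 | h0
    · simp [h0]
    · rw [if_neg h0]
      have hz := Int.alternating_sum_range_choose_of_ne h0
      have hzq : ((∑ l ∈ Finset.range (m - i + 1), (-1 : ℤ) ^ l * (Nat.choose (m - i) l : ℤ) : ℤ) : ℚ)
          = 0 := by rw [hz]; norm_num
      push_cast at hzq
      exact hzq
  rw [h3]
  by_cases h : i = m
  · subst h
    simp
  · have : m - i ≠ 0 := by omega
    simp [h, this]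

lemma lemB (m : ℕ) :
    ∑ j ∈ Finset.range (m + 1),
        (-1 : ℚ) ^ j * (Nat.choose m j : ℚ) * (Nat.choose (m + j) j : ℚ)
      = (-1 : ℚ) ^ m := by
  have hvdm : ∀ j, j ≤ m → (Nat.choose (m + j) j : ℚ)
      = ∑ i ∈ Finset.range (m + 1), (Nat.choose m i : ℚ) * (Nat.choose j i : ℚ) := by
    intro j hj
    have := Nat.add_choose_eq m j j
    rw [Finset.Nat.sum_antidiagonal_eq_sum_range_succ_mk] at this
    have hstep : (Nat.choose (m + j) j : ℚ)
        = ∑ i ∈ Finset.range (j + 1), (Nat.choose m i : ℚ) * (Nat.choose j (j - i) : ℚ) := by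
      exact_mod_cast congrArg (fun x : ℕ => (x : ℚ)) this
    rw [hstep]
    have hsymm : ∑ i ∈ Finset.range (j + 1), (Nat.choose m i : ℚ) * (Nat.choose j (j - i) : ℚ)
        = ∑ i ∈ Finset.range (j + 1), (Nat.choose m i : ℚ) * (Nat.choose j i : ℚ) := by
      apply Finset.sum_congr rfl
      intro i hi
      simp only [Finset.mem_range] at hi
      rw [Nat.choose_symm (by omega)]
    rw [hsymm]
    have hsub : Finset.range (j + 1) ⊆ Finset.range (m + 1) :=
      Finset.range_subset_range.2 (by omega)
    refine Finset.sum_subset hsub ?_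
    intro i _ hi
    simp only [Finset.mem_range, not_lt] at hi
    rw [Nat.choose_eq_zero_of_lt (show j < i by omega)]
    simp
  calc ∑ j ∈ Finset.range (m + 1),
        (-1 : ℚ) ^ j * (Nat.choose m j : ℚ) * (Nat.choose (m + j) j : ℚ)
      = ∑ j ∈ Finset.range (m + 1), ∑ i ∈ Finset.range (m + 1),
          (Nat.choose m i : ℚ) * ((-1 : ℚ) ^ j * (Nat.choose m j : ℚ) * (Nat.choose j i : ℚ)) := by
        apply Finset.sum_congr rfl
        intro j hj
        simp only [Finset.mem_range] at hj
        rw [hvdm j (by omega), Finset.mul_sum]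
        apply Finset.sum_congr rfl
        intro i _
        ring
    _ = ∑ i ∈ Finset.range (m + 1), (Nat.choose m i : ℚ) *
          ∑ j ∈ Finset.range (m + 1),
            (-1 : ℚ) ^ j * (Nat.choose m j : ℚ) * (Nat.choose j i : ℚ) := by
        rw [Finset.sum_comm]
        simp [Finset.mul_sum]
    _ = ∑ i ∈ Finset.range (m + 1), (Nat.choose m i : ℚ) *
          ((-1 : ℚ) ^ m * (if i = m then 1 else 0)) := by
        apply Finset.sum_congr rfl
        intro i hi
        simp only [Finset.mem_range] at hi
        rw [lemA m i (by omega)]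
    _ = (-1 : ℚ) ^ m := by
        rw [Finset.sum_eq_single m]
        · simp
        · intro b _ hb; simp [hb]
        · intro h; simp at h

/-- For `a = 1` and all `n ≥ 2`, the alternating sum
`∑_{k=0}^{n} (-1)^k f_k^{1,n}` with
`f_k^{1,n} = (1/2) * binom(n+k+2, k+1) * binom(n+1, k+1)`
equals `1` if `n` is even and `0` if `n` is odd. -/
theorem alternating_sum_real_case (n : ℕ) (hn : 2 ≤ n) :
    ∑ k ∈ Finset.range (n + 1),
        (-1 : ℚ) ^ k *
          ((Nat.choose (n + k + 2) (k + 1) : ℚ) * (Nat.choose (n + 1) (k + 1) : ℚ) / 2)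
      = if Even n then 1 else 0 := by
  have hB := lemB (n + 1)
  rw [Finset.sum_range_succ'] at hB
  simp only [pow_succ, Nat.choose_zero_right] at hB
  have key : ∑ k ∈ Finset.range (n + 1),
      (-1 : ℚ) ^ k * ((Nat.choose (n + k + 2) (k + 1) : ℚ) * (Nat.choose (n + 1) (k + 1) : ℚ))
      = 1 + (-1 : ℚ) ^ n := by
    have hre : ∀ k ∈ Finset.range (n + 1),
        (-1 : ℚ) ^ k * (-1 : ℚ) * (Nat.choose (n + 1) (k + 1) : ℚ)
            * (Nat.choose (n + 1 + (k + 1)) (k + 1) : ℚ)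
          = -((-1 : ℚ) ^ k * ((Nat.choose (n + k + 2) (k + 1) : ℚ)
            * (Nat.choose (n + 1) (k + 1) : ℚ))) := by
      intro k _
      have : n + 1 + (k + 1) = n + k + 2 := by omega
      rw [this]; ring
    rw [Finset.sum_congr rfl hre, Finset.sum_neg_distrib] at hB
    have h1 : (-1 : ℚ) ^ (n + 1) = -(-1 : ℚ) ^ n := by ring
    simp only [Nat.cast_one] at hB
    linarith [hB]
  calc ∑ k ∈ Finset.range (n + 1),
        (-1 : ℚ) ^ k *
          ((Nat.choose (n + k + 2) (k + 1) : ℚ) * (Nat.choose (n + 1) (k + 1) : ℚ) / 2)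
      = (∑ k ∈ Finset.range (n + 1),
          (-1 : ℚ) ^ k * ((Nat.choose (n + k + 2) (k + 1) : ℚ)
            * (Nat.choose (n + 1) (k + 1) : ℚ))) / 2 := by
        rw [Finset.sum_div]
        apply Finset.sum_congr rfl
        intro k _
        ring
    _ = (1 + (-1 : ℚ) ^ n) / 2 := by rw [key]
    _ = if Even n then 1 else 0 := by
        rcases Nat.even_or_odd n with h | h
        · rw [h.neg_one_pow, if_pos h]
          norm_num
        · rw [h.neg_one_pow, if_neg (Nat.not_even_iff_odd.mpr h)]
          norm_num
end

section
/- For a = 2 and all n \ge 2, the alternating sum \sum_{k=0}^{2n} (-1)^k f_k^{2,n} equals n+1, where f_k^{2,n} = ((n+1)/(k+1))^2 \sum_{i+j=k} binom(n+i+1, i) binom(n, i) binom(n+j+1, j) binom(n, j). -/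
open Finset Polynomial Nat


lemma asc_prod (i : ℕ) : ∀ N : ℕ, (∏ m ∈ Finset.range N, ((i : ℚ) + m + 1)) * (i ! : ℚ)
    = ((i + N)! : ℚ)
  | 0 => by simp
  | N + 1 => by
    rw [Finset.prod_range_succ, mul_right_comm, asc_prod i N,
      show i + (N + 1) = (i + N) + 1 from rfl]
    push_cast [Nat.factorial_succ]
    ring

lemma prod_below (j : ℕ) : ∏ m ∈ Finset.range j, ((m : ℚ) - j) = (-1) ^ j * (j ! : ℚ) := by
  have h1 : ∀ m ∈ Finset.range j, ((m : ℚ) - j) = (-1) * (((j - m : ℕ) : ℚ)) := by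
    intro m hm
    rw [Nat.cast_sub (le_of_lt (Finset.mem_range.mp hm))]
    ring
  rw [Finset.prod_congr rfl h1, Finset.prod_mul_distrib, Finset.prod_const, Finset.card_range]
  congr 1
  rw [← Nat.cast_prod]
  norm_cast
  rw [← Finset.prod_range_reflect (fun m => j - m) j]
  rw [← Finset.prod_range_add_one_eq_factorial j]
  apply Finset.prod_congr rfl
  intro m hm
  have := Finset.mem_range.mp hm
  omega

lemma prod_erase_sub (n j : ℕ) (hj : j ≤ n) :
    ∏ m ∈ (Finset.range (n + 1)).erase j, ((m : ℚ) - j)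
      = (-1) ^ j * (j ! : ℚ) * ((n - j)! : ℚ) := by
  induction n, hj using Nat.le_induction with
  | base =>
    rw [Finset.range_add_one, Finset.erase_insert (Finset.notMem_range_self), prod_below]
    simp
  | succ n hj ih =>
    rw [Finset.range_add_one, Finset.erase_insert_of_ne (by omega : n + 1 ≠ j),
      Finset.prod_insert (fun h => Finset.notMem_range_self (Finset.mem_of_mem_erase h)), ih]
    have h2 : n + 1 - j = (n - j) + 1 := by omega
    have h3 : ((n + 1 : ℕ) : ℚ) - j = ((n - j : ℕ) : ℚ) + 1 := by
      rw [Nat.cast_sub (by omega)]; push_cast; ring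
    rw [h2, Nat.factorial_succ, h3]
    push_cast
    ring

lemma fact_ne (m : ℕ) : ((m ! : ℕ) : ℚ) ≠ 0 := by
  exact_mod_cast Nat.factorial_ne_zero m

lemma star' (n i : ℕ) (hi : i ≤ n) :
    ∑ j ∈ Finset.range (n + 1),
        (-1 : ℚ) ^ j * ((n + j + 1)! : ℚ)
          / ((j ! : ℚ) * (j ! : ℚ) * ((n - j)! : ℚ) * ((i : ℚ) + j + 1) ^ 2)
      = (-1 : ℚ) ^ i * ((i ! : ℚ) * (i ! : ℚ) * ((n - i)! : ℚ)) / ((n + i + 1)! : ℚ) := by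
  set r : ℕ → ℚ := fun j =>
    (-1) ^ (n + j) * ((n + j + 1)! : ℚ)
      / (((i : ℚ) + j + 1) * ((j ! : ℚ) * (j ! : ℚ) * ((n - j)! : ℚ))) with hr
  set P : ℚ[X] := ∏ m ∈ (Finset.range (n + 1)).erase i, (X - C (m : ℚ)) with hPdef
  set Q : ℕ → ℚ[X] := fun j => ∏ m ∈ (Finset.range (n + 1)).erase j, (X + C ((m : ℚ) + 1))
    with hQdef
  set S : ℚ[X] := ∑ j ∈ Finset.range (n + 1), C (r j) * Q j with hSdef
  have hcard : ∀ j ∈ Finset.range (n + 1), ((Finset.range (n + 1)).erase j).card = n := by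
    intro j hj
    rw [Finset.card_erase_of_mem hj, Finset.card_range]
    omega
  have hPdeg : P.natDegree ≤ n := by
    refine le_trans (Polynomial.natDegree_prod_le _ _) ?_
    calc ∑ m ∈ (Finset.range (n+1)).erase i, (X - C (m:ℚ)).natDegree
        ≤ ∑ m ∈ (Finset.range (n+1)).erase i, 1 := by
          refine Finset.sum_le_sum fun m _ => ?_
          rw [natDegree_X_sub_C]
      _ = n := by rw [Finset.sum_const, smul_eq_mul, mul_one,
          hcard i (Finset.mem_range.mpr (by omega))]
  have hQdeg : ∀ j ∈ Finset.range (n + 1), (Q j).natDegree ≤ n := by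
    intro j hj
    refine le_trans (Polynomial.natDegree_prod_le _ _) ?_
    calc ∑ m ∈ (Finset.range (n+1)).erase j, (X + C ((m:ℚ)+1)).natDegree
        ≤ ∑ m ∈ (Finset.range (n+1)).erase j, 1 := by
          refine Finset.sum_le_sum fun m _ => ?_
          rw [natDegree_X_add_C]
      _ = n := by rw [Finset.sum_const, smul_eq_mul, mul_one, hcard j hj]
  have hSdeg : S.natDegree ≤ n := by
    refine Polynomial.natDegree_sum_le_of_forall_le _ _ fun j hj => ?_
    exact le_trans (Polynomial.natDegree_C_mul_le _ _) (hQdeg j hj)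
  -- evaluation facts
  have hQeval : ∀ j ∈ Finset.range (n + 1), ∀ x : ℚ,
      (Q j).eval x = ∏ m ∈ (Finset.range (n + 1)).erase j, (x + m + 1) := by
    intro j hj x
    rw [hQdef, Polynomial.eval_prod]
    exact Finset.prod_congr rfl fun m _ => by simp [add_assoc]
  have hPeval : ∀ x : ℚ,
      P.eval x = ∏ m ∈ (Finset.range (n + 1)).erase i, (x - m) := by
    intro x
    rw [hPdef, Polynomial.eval_prod]
    exact Finset.prod_congr rfl fun m _ => by simp
  have hPS : P = S := by
    have h0 : P - S = 0 := by
      apply Polynomial.eq_zero_of_natDegree_lt_card_of_eval_eq_zero' (P - S)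
        ((Finset.range (n + 1)).image (fun m : ℕ => -((m : ℚ) + 1)))
      · intro x hx
        obtain ⟨j, hj, rfl⟩ := Finset.mem_image.mp hx
        have hjn : j ≤ n := by have := Finset.mem_range.mp hj; omega
        rw [Polynomial.eval_sub, sub_eq_zero]
        -- P eval
        have hB : P.eval (-((j:ℚ)+1)) = (-1)^n * ∏ m ∈ (Finset.range (n+1)).erase i,
            ((j:ℚ) + m + 1) := by
          rw [hPeval]
          have : ∀ m ∈ (Finset.range (n+1)).erase i,
              (-((j:ℚ)+1) - m) = (-1) * ((j:ℚ) + m + 1) := fun m _ => by ring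
          rw [Finset.prod_congr rfl this, Finset.prod_mul_distrib, Finset.prod_const,
            hcard i (Finset.mem_range.mpr (by omega))]
        -- S eval
        have hSe : S.eval (-((j:ℚ)+1)) = r j * ((-1)^j * (j ! : ℚ) * ((n-j)! : ℚ)) := by
          rw [hSdef, Polynomial.eval_finset_sum]
          rw [Finset.sum_eq_single j]
          · rw [Polynomial.eval_mul, Polynomial.eval_C, hQeval j hj]
            congr 1
            have : ∀ m ∈ (Finset.range (n+1)).erase j,
                (-((j:ℚ)+1) + m + 1) = ((m:ℚ) - j) := fun m _ => by ring
            rw [Finset.prod_congr rfl this, prod_erase_sub n j hjn]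
          · intro j' hj' hne
            rw [Polynomial.eval_mul, hQeval j' hj']
            have hmem : j ∈ (Finset.range (n+1)).erase j' :=
              Finset.mem_erase.mpr ⟨fun h => hne (h ▸ rfl), hj⟩
            rw [Finset.prod_eq_zero hmem (by ring), mul_zero]
          · intro h; exact absurd hj h
        -- combine
        have hA : (∏ m ∈ (Finset.range (n+1)).erase i, ((j:ℚ) + m + 1))
            * (((j:ℚ) + i + 1) * (j ! : ℚ)) = ((n + j + 1)! : ℚ) := by
          have h1 := Finset.prod_erase_mul (Finset.range (n+1))
            (fun m => ((j:ℚ) + m + 1)) (Finset.mem_range.mpr (show i < n+1 by omega))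
          have h2 := asc_prod j (n+1)
          rw [show j + (n+1) = n + j + 1 from by omega] at h2
          calc (∏ m ∈ (Finset.range (n+1)).erase i, ((j:ℚ) + m + 1))
              * (((j:ℚ) + i + 1) * (j ! : ℚ))
              = ((∏ m ∈ (Finset.range (n+1)).erase i, ((j:ℚ) + m + 1)) * ((j:ℚ) + i + 1))
                * (j ! : ℚ) := by ring
            _ = (∏ m ∈ Finset.range (n+1), ((j:ℚ) + m + 1)) * (j ! : ℚ) := by rw [h1]
            _ = ((n + j + 1)! : ℚ) := h2
        rw [hB, hSe, hr]
        simp only []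
        have hne2 : ((i:ℚ) + j + 1) ≠ 0 := by positivity
        have heven : ((-1:ℚ)) ^ (j * 2) = 1 := by
          rw [mul_comm, pow_mul, neg_one_sq, one_pow]
        rw [div_mul_eq_mul_div, eq_div_iff (by positivity : ((i:ℚ)+j+1) * ((j ! : ℚ) * (j ! : ℚ) * ((n-j)! : ℚ)) ≠ 0)]
        linear_combination ((-1:ℚ)^n * (j ! : ℚ) * ((n-j)! : ℚ)) * hA
          - (((n+j+1)! : ℚ) * (j ! : ℚ) * ((n-j)! : ℚ) * (-1:ℚ)^n) * heven
      · rw [Finset.card_image_of_injective _ (fun a b hab => by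
          have : (a:ℚ) = b := by linarith [hab]
          exact_mod_cast this), Finset.card_range]
        have := Polynomial.natDegree_sub_le P S
        omega
    exact sub_eq_zero.mp h0
  -- evaluate the polynomial identity at x = i
  have hIe : ∀ j ∈ Finset.range (n + 1),
      (∏ m ∈ (Finset.range (n + 1)).erase j, ((i : ℚ) + m + 1))
        * (((i : ℚ) + j + 1) * (i ! : ℚ)) = ((n + i + 1)! : ℚ) := by
    intro j hj
    have h1 := Finset.prod_erase_mul (Finset.range (n + 1))
      (fun m => ((i : ℚ) + m + 1)) hj
    have h2 := asc_prod i (n + 1)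
    rw [show i + (n + 1) = n + i + 1 from by omega] at h2
    calc (∏ m ∈ (Finset.range (n+1)).erase j, ((i:ℚ) + m + 1))
        * (((i:ℚ) + j + 1) * (i ! : ℚ))
        = ((∏ m ∈ (Finset.range (n+1)).erase j, ((i:ℚ) + m + 1)) * ((i:ℚ) + j + 1))
          * (i ! : ℚ) := by ring
      _ = (∏ m ∈ Finset.range (n+1), ((i:ℚ) + m + 1)) * (i ! : ℚ) := by rw [h1]
      _ = ((n + i + 1)! : ℚ) := h2
  have hPi : P.eval (i : ℚ) = (-1) ^ n * ((-1) ^ i * (i ! : ℚ) * ((n - i)! : ℚ)) := by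
    rw [hPeval]
    have : ∀ m ∈ (Finset.range (n+1)).erase i,
        ((i:ℚ) - m) = (-1) * ((m:ℚ) - i) := fun m _ => by ring
    rw [Finset.prod_congr rfl this, Finset.prod_mul_distrib, Finset.prod_const,
      hcard i (Finset.mem_range.mpr (by omega)), prod_erase_sub n i hi]
  have hSi : S.eval (i : ℚ) = ∑ j ∈ Finset.range (n + 1),
      r j * ∏ m ∈ (Finset.range (n + 1)).erase j, ((i : ℚ) + m + 1) := by
    rw [hSdef, Polynomial.eval_finset_sum]
    refine Finset.sum_congr rfl fun j hj => ?_
    rw [Polynomial.eval_mul, Polynomial.eval_C, hQeval j hj]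
  have heven : ((-1 : ℚ)) ^ (n * 2) = 1 := by
    rw [mul_comm, pow_mul, neg_one_sq, one_pow]
  calc ∑ j ∈ Finset.range (n + 1),
        (-1 : ℚ) ^ j * ((n + j + 1)! : ℚ)
          / ((j ! : ℚ) * (j ! : ℚ) * ((n - j)! : ℚ) * ((i : ℚ) + j + 1) ^ 2)
      = ∑ j ∈ Finset.range (n + 1), ((-1:ℚ) ^ n * (i ! : ℚ) / ((n + i + 1)! : ℚ))
          * (r j * ∏ m ∈ (Finset.range (n + 1)).erase j, ((i : ℚ) + m + 1)) := by
        refine Finset.sum_congr rfl fun j hj => ?_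
        have hI := hIe j hj
        have hne1 : ((i:ℚ) + j + 1) ≠ 0 := by positivity
        rw [hr]
        simp only []
        have hne2 : ((n + i + 1)! : ℚ) ≠ 0 := by exact_mod_cast Nat.factorial_ne_zero _
        have hne3 : ((j)! : ℚ) ≠ 0 := by exact_mod_cast Nat.factorial_ne_zero _
        have hne4 : (((n-j))! : ℚ) ≠ 0 := by exact_mod_cast Nat.factorial_ne_zero _
        field_simp
        linear_combination (-(-1:ℚ)^j) * hI
          - ((-1:ℚ)^j * (∏ m ∈ (Finset.range (n+1)).erase j, ((i:ℚ) + m + 1)) * ((i:ℚ)+j+1) * (i ! : ℚ)) * heven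
      _ = ((-1:ℚ) ^ n * (i ! : ℚ) / ((n + i + 1)! : ℚ)) * S.eval (i : ℚ) := by
        rw [hSi, Finset.mul_sum]
      _ = (-1 : ℚ) ^ i * ((i ! : ℚ) * (i ! : ℚ) * ((n - i)! : ℚ)) / ((n + i + 1)! : ℚ) := by
        rw [← hPS, hPi]
        field_simp
        linear_combination heven


lemma chooseFact (n j : ℕ) (hj : j ≤ n) :
    ((n + j + 1).choose j : ℚ) * (n.choose j : ℚ)
      * (((n : ℚ) + 1) * (j ! : ℚ) * (j ! : ℚ) * ((n - j)! : ℚ)) = ((n + j + 1)! : ℚ) := by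
  have h1 : (n + j + 1).choose j * j ! * (n + 1)! = (n + j + 1)! := by
    have := Nat.choose_mul_factorial_mul_factorial (show j ≤ n + j + 1 by omega)
    rw [show n + j + 1 - j = n + 1 from by omega] at this
    exact this
  have h2 : n.choose j * j ! * (n - j)! = n ! := by
    exact Nat.choose_mul_factorial_mul_factorial hj
  have h1q : ((n + j + 1).choose j : ℚ) * (j ! : ℚ) * (((n + 1)! : ℕ) : ℚ)
      = ((n + j + 1)! : ℚ) := by exact_mod_cast congrArg (Nat.cast (R := ℚ)) h1
  have h2q : (n.choose j : ℚ) * (j ! : ℚ) * ((n - j)! : ℚ) = (n ! : ℚ) := by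
    exact_mod_cast congrArg (Nat.cast (R := ℚ)) h2
  have h3 : (((n + 1)! : ℕ) : ℚ) = ((n : ℚ) + 1) * (n ! : ℚ) := by
    push_cast [Nat.factorial_succ]; ring
  have hn : (n ! : ℚ) ≠ 0 := by exact_mod_cast Nat.factorial_ne_zero n
  apply mul_right_cancel₀ hn
  calc ((n + j + 1).choose j : ℚ) * (n.choose j : ℚ)
      * (((n : ℚ) + 1) * (j ! : ℚ) * (j ! : ℚ) * ((n - j)! : ℚ)) * (n ! : ℚ)
      = (((n + j + 1).choose j : ℚ) * (j ! : ℚ) * (((n : ℚ) + 1) * (n ! : ℚ)))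
        * ((n.choose j : ℚ) * (j ! : ℚ) * ((n - j)! : ℚ)) := by ring
    _ = (((n + j + 1).choose j : ℚ) * (j ! : ℚ) * (((n + 1)! : ℕ) : ℚ)) * (n ! : ℚ) := by
        rw [h3, h2q]
    _ = ((n + j + 1)! : ℚ) * (n ! : ℚ) := by rw [h1q]

def termF (n i j : ℕ) : ℚ :=
  (-1) ^ (i + j) * ((n + 1 : ℚ) / (((i + j : ℕ) : ℚ) + 1)) ^ 2 *
    ((Nat.choose (n + i + 1) i : ℚ) * (Nat.choose n i : ℚ)
      * (Nat.choose (n + j + 1) j : ℚ) * (Nat.choose n j : ℚ))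

lemma innerSumOne (n i : ℕ) (hi : i ≤ n) :
    ∑ j ∈ Finset.range (n + 1), termF n i j = 1 := by
  have hstep : ∀ j ∈ Finset.range (n + 1),
      termF n i j = ((-1 : ℚ) ^ i * ((n : ℚ) + 1) * ((n + i + 1).choose i : ℚ)
          * (n.choose i : ℚ))
        * ((-1 : ℚ) ^ j * ((n + j + 1)! : ℚ)
          / ((j ! : ℚ) * (j ! : ℚ) * ((n - j)! : ℚ) * ((i : ℚ) + j + 1) ^ 2)) := by
    intro j hj
    have hjn : j ≤ n := by have := Finset.mem_range.mp hj; omega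
    have hF := chooseFact n j hjn
    rw [termF]
    have hc : (((i + j : ℕ) : ℚ) + 1) = ((i : ℚ) + j + 1) := by push_cast; ring
    rw [hc, pow_add, div_pow]
    have hne1 : ((i : ℚ) + j + 1) ≠ 0 := by positivity
    have hne3 : ((j)! : ℚ) ≠ 0 := by exact_mod_cast Nat.factorial_ne_zero _
    have hne4 : (((n - j))! : ℚ) ≠ 0 := by exact_mod_cast Nat.factorial_ne_zero _
    field_simp
    linear_combination (((n + i + 1).choose i : ℚ) * (n.choose i : ℚ)) * hF
  rw [Finset.sum_congr rfl hstep, ← Finset.mul_sum, star' n i hi]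
  have hFi := chooseFact n i hi
  have hsq : ((-1 : ℚ) ^ i) * ((-1 : ℚ) ^ i) = 1 := by
    rw [← pow_add]; exact Even.neg_one_pow ⟨i, rfl⟩
  have hne2 : ((n + i + 1)! : ℚ) ≠ 0 := by exact_mod_cast Nat.factorial_ne_zero _
  have hev : ((-1:ℚ)) ^ (i * 2) = 1 := by rw [mul_comm, pow_mul, neg_one_sq, one_pow]
  field_simp
  linear_combination ((-1:ℚ)^i * (-1:ℚ)^i) * hFi
    + (((n + i + 1)! : ℚ) - ((n + i + 1).choose i : ℚ) * (n.choose i : ℚ)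
        * (((n : ℚ) + 1) * (i ! : ℚ) * (i ! : ℚ) * ((n - i)! : ℚ))) * hsq
    + (((n:ℚ)+1) * ((n + i + 1).choose i : ℚ) * (n.choose i : ℚ) * (i ! : ℚ)^2
        * ((n - i)! : ℚ)) * hev

/-- For `a = 2` and all `n ≥ 2`, the alternating sum
`∑_{k=0}^{2n} (-1)^k f_k^{2,n}` with
`f_k^{2,n} = ((n+1)/(k+1))² * ∑_{i+j=k} binom(n+i+1,i) binom(n,i) binom(n+j+1,j) binom(n,j)`
equals `n + 1`. -/
theorem alternating_sum_complex_case (n : ℕ) (hn : 2 ≤ n) :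
    ∑ k ∈ Finset.range (2 * n + 1),
        (-1 : ℚ) ^ k * ((n + 1 : ℚ) / (k + 1)) ^ 2 *
          ∑ i ∈ Finset.range (k + 1),
            (Nat.choose (n + i + 1) i : ℚ) * (Nat.choose n i : ℚ) *
              (Nat.choose (n + (k - i) + 1) (k - i) : ℚ) * (Nat.choose n (k - i) : ℚ)
      = (n : ℚ) + 1 := by
  have step1 : ∑ k ∈ Finset.range (2 * n + 1),
        (-1 : ℚ) ^ k * ((n + 1 : ℚ) / (k + 1)) ^ 2 *
          ∑ i ∈ Finset.range (k + 1),
            (Nat.choose (n + i + 1) i : ℚ) * (Nat.choose n i : ℚ) *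
              (Nat.choose (n + (k - i) + 1) (k - i) : ℚ) * (Nat.choose n (k - i) : ℚ)
      = ∑ k ∈ Finset.range (2 * n + 1), ∑ i ∈ Finset.range (k + 1), termF n i (k - i) := by
    refine Finset.sum_congr rfl fun k hk => ?_
    rw [Finset.mul_sum]
    refine Finset.sum_congr rfl fun i hi => ?_
    have hik : i ≤ k := by have := Finset.mem_range.mp hi; omega
    have hk2 : i + (k - i) = k := by omega
    rw [termF, hk2]
  rw [step1]
  have step2 : ∑ k ∈ Finset.range (2 * n + 1), ∑ i ∈ Finset.range (k + 1), termF n i (k - i)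
      = ∑ i ∈ Finset.range (n + 1), ∑ j ∈ Finset.range (n + 1), termF n i j := by
    rw [Finset.sum_sigma', Finset.sum_sigma']
    rw [← Finset.sum_filter_of_ne (p := fun p : Σ _ : ℕ, ℕ => p.2 ≤ n ∧ p.1 - p.2 ≤ n)
      (by
        intro p hp hne
        by_contra hcon
        apply hne
        rw [not_and_or] at hcon
        rcases hcon with h | h
        · rw [termF]
          have : (n.choose p.2 : ℚ) = 0 := by
            rw [Nat.choose_eq_zero_of_lt (by omega)]; norm_num
          rw [this]; ring
        · rw [termF]
          have : (n.choose (p.1 - p.2) : ℚ) = 0 := by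
            rw [Nat.choose_eq_zero_of_lt (by omega)]; norm_num
          rw [this]; ring)]
    refine Finset.sum_nbij' (fun p => ⟨p.2, p.1 - p.2⟩) (fun q => ⟨q.1 + q.2, q.1⟩)
      ?_ ?_ ?_ ?_ ?_
    · intro p hp
      simp only [Finset.mem_filter, Finset.mem_sigma, Finset.mem_range] at hp ⊢
      omega
    · intro q hq
      simp only [Finset.mem_sigma, Finset.mem_range] at hq ⊢
      refine Finset.mem_filter.mpr ⟨Finset.mem_sigma.mpr ⟨?_, ?_⟩, ?_, ?_⟩ <;>
        simp only [Finset.mem_range] <;> omega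
    · rintro ⟨k, i⟩ hp
      simp only [Finset.mem_filter, Finset.mem_sigma, Finset.mem_range] at hp
      have h : i + (k - i) = k := by omega
      simp [h]
    · rintro ⟨a, b⟩ hq
      simp only [Finset.mem_sigma, Finset.mem_range] at hq
      have h : a + b - a = b := by omega
      simp [h]
    · intro p hp
      rfl
  rw [step2]
  have step3 : ∀ i ∈ Finset.range (n + 1), ∑ j ∈ Finset.range (n + 1), termF n i j = 1 :=
    fun i hi => innerSumOne n i (by have := Finset.mem_range.mp hi; omega)
  rw [Finset.sum_congr rfl step3, Finset.sum_const, Finset.card_range]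
  push_cast
  ring
end

section
/- The quantity f_k^{1,n} = (1/2) binom(n+k+2, k+1) binom(n+1, k+1) is an integer for all integers n \ge 1 and 0 \le k \le n. -/
lemma key (b : ℕ) : ∀ a, 1 ≤ b → ¬ 2 ∣ Nat.choose a b → 2 ∣ Nat.choose (a + b) b := by
  induction b using Nat.strong_induction_on with
  | _ b ih =>
  intro a hb hodd
  have h2 : Fact (Nat.Prime 2) := ⟨Nat.prime_two⟩
  have H1 : Nat.choose a b % 2 =
      Nat.choose (a % 2) (b % 2) * Nat.choose (a / 2) (b / 2) % 2 :=
    Choose.choose_modEq_choose_mod_mul_choose_div_nat (p := 2)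
  have H2 : Nat.choose (a + b) b % 2 =
      Nat.choose ((a + b) % 2) (b % 2) * Nat.choose ((a + b) / 2) (b / 2) % 2 :=
    Choose.choose_modEq_choose_mod_mul_choose_div_nat (p := 2)
  rcases Nat.even_or_odd b with hbe | hbo
  · -- b even, so b % 2 = 0 and b / 2 ≥ 1
    have hb2 : b % 2 = 0 := Nat.even_iff.mp hbe
    have hbd : 1 ≤ b / 2 := by omega
    have hsum : (a + b) / 2 = a / 2 + b / 2 := by omega
    have hsm : (a + b) % 2 = a % 2 := by omega
    rw [hb2, Nat.choose_zero_right, one_mul] at H1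
    have hodd' : ¬ 2 ∣ Nat.choose (a / 2) (b / 2) := by
      intro h
      exact hodd (by omega : 2 ∣ Nat.choose a b)
    have := ih (b / 2) (by omega) (a / 2) hbd hodd'
    rw [hb2, hsum, hsm, Nat.choose_zero_right, one_mul] at H2
    omega
  · -- b odd
    have hb2 : b % 2 = 1 := Nat.odd_iff.mp hbo
    have ha2 : a % 2 = 1 := by
      rcases Nat.even_or_odd a with hae | hao
      · exfalso
        have : a % 2 = 0 := Nat.even_iff.mp hae
        rw [this, hb2] at H1
        simp [Nat.choose] at H1
        exact hodd (by omega)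
      · exact Nat.odd_iff.mp hao
    have hsm : (a + b) % 2 = 0 := by omega
    rw [hsm, hb2] at H2
    simp [Nat.choose] at H2
    omega

/-- `f_k^{1,n} = (1/2) * binom(n+k+2, k+1) * binom(n+1, k+1)` is an integer for
all `n ≥ 1` and `0 ≤ k ≤ n`, i.e. the product of the two binomial coefficients
is always even in this range. -/
theorem f_real_is_integer (n k : ℕ) (hn : 1 ≤ n) (hk : k ≤ n) :
    2 ∣ Nat.choose (n + k + 2) (k + 1) * Nat.choose (n + 1) (k + 1) := by
  by_cases h : 2 ∣ Nat.choose (n + 1) (k + 1)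
  · exact Dvd.dvd.mul_left h _
  · have := key (k + 1) (n + 1) (by omega) h
    have heq : n + k + 2 = (n + 1) + (k + 1) := by omega
    rw [heq]
    exact Dvd.dvd.mul_right this _
end
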